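/- Suppose D_iᵀAD_i is invertible and rank D_i = p for all 0 ≤ i ≤ k in the cCG iteration, and suppose moreover rank R_{k+1} = p. Then for every nonzero vector v ∈ ℝᵖ, the vector R_{k+1}v does not belong to the subspace span[D_i]₀^k. -/

import Mathlib

open Matrix

/-- The span in `ℝⁿ` of all the columns of the matrices `M 0, …, M k`. -/
def colSpan (n p : ℕ) (k : ℕ) (M : ℕ → Matrix (Fin n) (Fin p) ℝ) :
    Submodule ℝ (Fin n → ℝ) :=
  Submodule.span ℝ {v : Fin n → ℝ | ∃ i ≤ k, ∃ j : Fin p, v = fun r => M i r j}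

private lemma mulVec_inj_of_rank {n p : ℕ} (M : Matrix (Fin n) (Fin p) ℝ) (h : M.rank = p)
    {v : Fin p → ℝ} (hv : M *ᵥ v = 0) : v = 0 := by
  have h1 := LinearMap.finrank_range_add_finrank_ker M.mulVecLin
  have h2 : Module.finrank ℝ (LinearMap.range M.mulVecLin) = p := h
  have h3 : Module.finrank ℝ (Fin p → ℝ) = p := by simp
  have h4 : Module.finrank ℝ (LinearMap.ker M.mulVecLin) = 0 := by omega
  have hk : LinearMap.ker M.mulVecLin = ⊥ := Submodule.finrank_eq_zero.mp h4
  have hm : v ∈ LinearMap.ker M.mulVecLin := by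
    simpa [Matrix.mulVecLin_apply] using hv
  rw [hk] at hm
  simpa using hm

private lemma dot_helper {n p : ℕ} (A : Matrix (Fin n) (Fin n) ℝ)
    (M N : Matrix (Fin n) (Fin p) ℝ) (u v : Fin p → ℝ) :
    (M *ᵥ u) ⬝ᵥ (A *ᵥ (N *ᵥ v)) = u ⬝ᵥ ((Mᵀ * (A * N)) *ᵥ v) := by
  rw [Matrix.mulVec_mulVec, Matrix.dotProduct_mulVec, ← Matrix.vecMul_transpose,
    Matrix.vecMul_vecMul, Matrix.dotProduct_mulVec]

/-- If `D_iᵀAD_i` is invertible and `rank D_i = p` for all `0 ≤ i ≤ k`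
in the cCG iteration, and moreover `rank R_{k+1} = p`, then for every nonzero
`v ∈ ℝᵖ`, the vector `R_{k+1}v` does not belong to `span[D_i]₀^k`. -/
theorem cCG_residue_image_outside_span
    (n p : ℕ) (hn : 0 < n) (hp : 0 < p) (hpn : p ≤ n)
    (A : Matrix (Fin n) (Fin n) ℝ) (hA : A.PosDef)
    (b : Fin n → ℝ) (k : ℕ)
    (X R D : ℕ → Matrix (Fin n) (Fin p) ℝ)
    (α β : ℕ → Matrix (Fin p) (Fin p) ℝ)
    (hR : ∀ i, R i = A * X i - Matrix.vecMulVec b 1)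
    (hD0 : D 0 = R 0)
    (hinv : ∀ i ≤ k, IsUnit ((D i)ᵀ * A * D i).det)
    (hrank : ∀ i ≤ k, (D i).rank = p)
    (hα : ∀ i ≤ k, α i = -((R i)ᵀ * D i * ((D i)ᵀ * A * D i)⁻¹))
    (hX : ∀ i ≤ k, X (i + 1) = X i + D i * (α i)ᵀ)
    (hβ : ∀ i ≤ k, β i = -((R (i + 1))ᵀ * A * D i * ((D i)ᵀ * A * D i)⁻¹))
    (hDs : ∀ i ≤ k, D (i + 1) = R (i + 1) + D i * (β i)ᵀ)
    (hrankR : (R (k + 1)).rank = p)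
    :
    ∀ v : Fin p → ℝ, v ≠ 0 → R (k + 1) *ᵥ v ∉ colSpan n p k D := by
  have hAt : Aᵀ = A := by
    rw [← Matrix.conjTranspose_eq_transpose_of_trivial]; exact hA.1
  have hGmul : ∀ i ≤ k, ((D i)ᵀ * A * D i)⁻¹ * ((D i)ᵀ * A * D i) = 1 :=
    fun i hi => Matrix.nonsing_inv_mul _ (hinv i hi)
  -- R step
  have hRstep : ∀ i ≤ k, R (i+1) = R i + A * D i * (α i)ᵀ := by
    intro i hi
    rw [hR (i+1), hR i, hX i hi, Matrix.mul_add, ← Matrix.mul_assoc]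
    abel
  -- one-step orthogonality
  have hRD1 : ∀ i ≤ k, (R (i+1))ᵀ * D i = 0 := by
    intro i hi
    have h1 : (R (i+1))ᵀ * D i = (R i)ᵀ * D i + α i * ((D i)ᵀ * A * D i) := by
      rw [hRstep i hi]
      simp [Matrix.transpose_add, Matrix.add_mul, Matrix.transpose_mul, Matrix.mul_assoc, hAt]
    have h2 : α i * ((D i)ᵀ * A * D i) = -((R i)ᵀ * D i) := by
      rw [hα i hi, Matrix.neg_mul, Matrix.mul_assoc ((R i)ᵀ * D i), hGmul i hi, Matrix.mul_one]
    rw [h1, h2, add_neg_cancel]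
  -- one-step conjugacy
  have hDAD1 : ∀ i ≤ k, (D (i+1))ᵀ * (A * D i) = 0 := by
    intro i hi
    have h1 : (D (i+1))ᵀ * (A * D i)
        = (R (i+1))ᵀ * (A * D i) + β i * ((D i)ᵀ * A * D i) := by
      rw [hDs i hi]
      simp [Matrix.transpose_add, Matrix.add_mul, Matrix.transpose_mul, Matrix.mul_assoc]
    have h2 : β i * ((D i)ᵀ * A * D i) = -((R (i+1))ᵀ * (A * D i)) := by
      rw [hβ i hi, Matrix.neg_mul, Matrix.mul_assoc ((R (i+1))ᵀ * A * D i), hGmul i hi,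
        Matrix.mul_one, Matrix.mul_assoc]
    rw [h1, h2, add_neg_cancel]
  -- injectivity of R i
  have hstar : ∀ w : Fin n → ℝ, star w = w := fun w => by simp
  have hPD : ∀ w : Fin n → ℝ, w ⬝ᵥ (A *ᵥ w) = 0 → w = 0 := by
    intro w hw
    by_contra hne
    have := hA.dotProduct_mulVec_pos hne
    rw [hstar w, hw] at this
    exact lt_irrefl 0 this
  have hRinj : ∀ i ≤ k, ∀ v : Fin p → ℝ, R i *ᵥ v = 0 → v = 0 := by
    intro i hi v hv
    cases i with
    | zero =>
      rw [← hD0] at hv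
      exact mulVec_inj_of_rank (D 0) (hrank 0 (Nat.zero_le k)) hv
    | succ i =>
      have hik : i ≤ k := Nat.le_of_succ_le hi
      have hDv : D (i+1) *ᵥ v = D i *ᵥ ((β i)ᵀ *ᵥ v) := by
        rw [hDs i hik, Matrix.add_mulVec, hv, zero_add, ← Matrix.mulVec_mulVec]
      have hdot : (D (i+1) *ᵥ v) ⬝ᵥ (A *ᵥ (D (i+1) *ᵥ v)) = 0 := by
        conv_lhs => rw [show A *ᵥ (D (i+1) *ᵥ v) = A *ᵥ (D i *ᵥ ((β i)ᵀ *ᵥ v)) by rw [← hDv]]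
        rw [dot_helper, hDAD1 i hik, Matrix.zero_mulVec, dotProduct_zero]
      exact mulVec_inj_of_rank (D (i+1)) (hrank (i+1) hi) (hPD _ hdot)
  -- R i ᵀ D i = R i ᵀ R i
  have hRDd : ∀ i ≤ k, (R i)ᵀ * D i = (R i)ᵀ * R i := by
    intro i hi
    cases i with
    | zero => rw [hD0]
    | succ i =>
      have hik : i ≤ k := Nat.le_of_succ_le hi
      rw [hDs i hik, Matrix.mul_add, ← Matrix.mul_assoc, hRD1 i hik, Matrix.zero_mul, add_zero]
  -- invertibility of α i
  have hαdet : ∀ i ≤ k, IsUnit ((α i)ᵀ).det := by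
    intro i hi
    have hker : LinearMap.ker ((R i)ᵀ * R i).mulVecLin = ⊥ := by
      rw [Matrix.ker_mulVecLin_transpose_mul_self]
      rw [LinearMap.ker_eq_bot']
      intro v hv
      exact hRinj i hi v hv
    have hRRunit : IsUnit ((R i)ᵀ * R i).det := by
      rw [← Matrix.isUnit_iff_isUnit_det, ← Matrix.mulVec_injective_iff_isUnit]
      intro x y hxy
      have : ((R i)ᵀ * R i) *ᵥ (x - y) = 0 := by
        rw [Matrix.mulVec_sub, hxy, sub_self]
      have hm : x - y ∈ LinearMap.ker ((R i)ᵀ * R i).mulVecLin := by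
        rw [LinearMap.mem_ker, Matrix.mulVecLin_apply]; exact this
      rw [hker] at hm
      exact sub_eq_zero.mp (Submodule.mem_bot ℝ |>.mp hm)
    have hα' : α i = -((R i)ᵀ * R i * ((D i)ᵀ * A * D i)⁻¹) := by
      rw [hα i hi, hRDd i hi]
    rw [Matrix.det_transpose, hα', Matrix.det_neg, Matrix.det_mul, Fintype.card_fin]
    exact ((isUnit_one.neg.pow p).mul (hRRunit.mul (Matrix.isUnit_nonsing_inv_det _ (hinv i hi))))
  have hαcancel : ∀ i ≤ k, ∀ E : Matrix (Fin p) (Fin p) ℝ, E * (α i)ᵀ = 0 → E = 0 := by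
    intro i hi E hE
    have := congrArg (fun M => M * ((α i)ᵀ)⁻¹) hE
    simpa [Matrix.mul_assoc, Matrix.mul_nonsing_inv _ (hαdet i hi), Matrix.zero_mul] using this
    -- main orthogonality induction
  have main : ∀ j, j ≤ k →
      (∀ i ≤ j, (R (j+1))ᵀ * D i = 0) ∧ (∀ i ≤ j, (D (j+1))ᵀ * (A * D i) = 0) := by
    intro j
    induction j with
    | zero =>
      intro h0
      constructor
      · intro i hi; obtain rfl := Nat.le_zero.mp hi; exact hRD1 0 h0
      · intro i hi; obtain rfl := Nat.le_zero.mp hi; exact hDAD1 0 h0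
    | succ j ih =>
      intro hj1
      have hjk : j ≤ k := Nat.le_of_succ_le hj1
      obtain ⟨ihR, ihD⟩ := ih hjk
      have hRpart : ∀ i ≤ j+1, (R (j+2))ᵀ * D i = 0 := by
        intro i hi
        rcases Nat.lt_or_ge i (j+1) with h | h
        · have hij : i ≤ j := Nat.lt_succ_iff.mp h
          have e1 : (R (j+2))ᵀ * D i
              = (R (j+1))ᵀ * D i + α (j+1) * ((D (j+1))ᵀ * (A * D i)) := by
            rw [hRstep (j+1) hj1]
            simp [Matrix.transpose_add, Matrix.add_mul, Matrix.transpose_mul,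
              Matrix.mul_assoc, hAt]
          rw [e1, ihR i hij, ihD i hij, Matrix.mul_zero, add_zero]
        · obtain rfl : i = j+1 := le_antisymm hi h
          exact hRD1 (j+1) hj1
      have hRR0 : ∀ m ≤ j+1, (R (j+2))ᵀ * R m = 0 := by
        intro m hm
        cases m with
        | zero => rw [← hD0]; exact hRpart 0 (Nat.zero_le _)
        | succ m' =>
          have hm'j : m' ≤ j + 1 := le_trans (Nat.le_succ m') hm
          have hm'k : m' ≤ k := le_trans (Nat.succ_le_succ_iff.mp hm) hjk
          have hRm : R (m'+1) = D (m'+1) - D m' * (β m')ᵀ := by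
            rw [hDs m' hm'k]; abel
          rw [hRm, Matrix.mul_sub, hRpart (m'+1) hm, ← Matrix.mul_assoc,
            hRpart m' hm'j, Matrix.zero_mul, sub_zero]
      have hDpart : ∀ i ≤ j+1, (D (j+2))ᵀ * (A * D i) = 0 := by
        intro i hi
        rcases Nat.lt_or_ge i (j+1) with h | h
        · have hij : i ≤ j := Nat.lt_succ_iff.mp h
          have hik : i ≤ k := le_trans hij hjk
          have hRAD : (R (j+2))ᵀ * (A * D i) = 0 := by
            refine hαcancel i hik _ ?_
            have h2 : A * D i * (α i)ᵀ = R (i+1) - R i := by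
              rw [hRstep i hik]; abel
            calc (R (j+2))ᵀ * (A * D i) * (α i)ᵀ
                = (R (j+2))ᵀ * (A * D i * (α i)ᵀ) := by rw [Matrix.mul_assoc]
              _ = (R (j+2))ᵀ * (R (i+1) - R i) := by rw [h2]
              _ = 0 := by
                  rw [Matrix.mul_sub, hRR0 (i+1) (Nat.succ_le_succ hij),
                    hRR0 i (le_trans hij (Nat.le_succ j)), sub_zero]
          have e1 : (D (j+2))ᵀ * (A * D i)
              = (R (j+2))ᵀ * (A * D i) + β (j+1) * ((D (j+1))ᵀ * (A * D i)) := by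
            rw [hDs (j+1) hj1]
            simp [Matrix.transpose_add, Matrix.add_mul, Matrix.transpose_mul, Matrix.mul_assoc]
          rw [e1, hRAD, ihD i hij, Matrix.mul_zero, add_zero]
        · obtain rfl : i = j+1 := le_antisymm hi h
          exact hDAD1 (j+1) hj1
      exact ⟨hRpart, hDpart⟩
  have horth : ∀ i ≤ k, (R (k+1))ᵀ * D i = 0 := (main k le_rfl).1
  -- conclusion
  intro v hv hmem
  have hker : colSpan n p k D ≤ LinearMap.ker ((R (k+1))ᵀ).mulVecLin := by
    rw [colSpan, Submodule.span_le]
    rintro w ⟨i, hik, j, rfl⟩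
    simp only [SetLike.mem_coe, LinearMap.mem_ker, Matrix.mulVecLin_apply]
    have hcol : (fun r => D i r j) = D i *ᵥ Pi.single j 1 := by
      simp [Matrix.mulVec_single]; rfl
    rw [hcol, Matrix.mulVec_mulVec, horth i hik, Matrix.zero_mulVec]
  have h0 : ((R (k+1))ᵀ * R (k+1)) *ᵥ v = 0 := by
    have hm := hker hmem
    rw [LinearMap.mem_ker, Matrix.mulVecLin_apply] at hm
    rw [← Matrix.mulVec_mulVec]
    exact hm
  have h1 : (R (k+1) *ᵥ v) ⬝ᵥ (R (k+1) *ᵥ v) = 0 := by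
    have h2 := congrArg (dotProduct v) h0
    rwa [← Matrix.mulVec_mulVec, Matrix.dotProduct_mulVec, Matrix.vecMul_transpose,
      dotProduct_zero] at h2
  exact hv (mulVec_inj_of_rank _ hrankR (dotProduct_self_eq_zero.mp h1))
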